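/- Let K be a δ-hyperbolic graph, P an embedded λ-quasigeodesic, and G a geodesic with the same endpoints as P, written as a concatenation G = G₁⋯G_ℓ with 10ε ≤ |G_i| ≤ 20ε, where ε = ε(δ,λ) is the slim-rectangle constant. For each i let S_i be a geodesic from the startpoint of G_i to P (so |S_i| ≤ ε), and define subpaths P_i of P from the endpoint of S_i to the endpoint of S_{i+1} (and P_ℓ to the endpoint of P). Then P_i and P_j share at most one point when i ≠ j, and consequently P = P₁P₂⋯P_ℓ. -/

import Mathlib

open SimpleGraph

universe u v

variable {V : Type u} {G : Type v}

/-- A graph is fine if each edge lies in only finitely many circuits (embedded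
cycles) of length `n`, for every `n`. -/
def Fine (K : SimpleGraph V) : Prop :=
  ∀ (n : ℕ) (u w : V), K.Adj u w →
    {c : K.Walk u u | c.IsCycle ∧ c.length = n ∧ s(u, w) ∈ c.edges}.Finite

/-- An action of `G` by permutations of `V` preserves the graph `K`. -/
def ActsOn [Group G] (φ : G →* Equiv.Perm V) (K : SimpleGraph V) : Prop :=
  ∀ (g : G) (u w : V), K.Adj u w → K.Adj (φ g u) (φ g w)

/-- The stabilizer of a vertex. -/
def stab [Group G] (φ : G →* Equiv.Perm V) (x : V) : Subgroup G where
  carrier := {g | φ g x = x}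
  one_mem' := by simp
  mul_mem' := by
    intro a b ha hb
    simp only [Set.mem_setOf_eq, map_mul, Equiv.Perm.mul_apply] at *
    rw [hb, ha]
  inv_mem' := by
    intro a ha
    simp only [Set.mem_setOf_eq, map_inv] at *
    conv_lhs => rw [← ha]
    simp

/-- The conjugate subgroup `g P g⁻¹`. -/
def conjSub [Group G] (g : G) (P : Subgroup G) : Subgroup G :=
  Subgroup.map (MulAut.conj g).toMonoidHom P

/-- All edge stabilizers are finite (we use pointwise stabilizers of the two
endpoints; the actions considered are without inversions). -/
def FiniteEdgeStabs [Group G] (φ : G →* Equiv.Perm V) (K : SimpleGraph V) : Prop :=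
  ∀ u w : V, K.Adj u w → ((stab φ u ⊓ stab φ w : Subgroup G) : Set G).Finite

/-- There are finitely many `G`-orbits of edges. -/
def FinEdgeOrbits [Group G] (φ : G →* Equiv.Perm V) (K : SimpleGraph V) : Prop :=
  ∃ F : Set (V × V), F.Finite ∧
    ∀ u w : V, K.Adj u w → ∃ g : G, ∃ p ∈ F, φ g p.1 = u ∧ φ g p.2 = w

/-- Gromov hyperbolicity of the path metric of a graph (four point condition). -/
def Hyperbolic (K : SimpleGraph V) : Prop :=
  ∃ δ : ℝ, ∀ x y z t : V,
    (K.dist x y : ℝ) + (K.dist z t : ℝ) ≤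
      max ((K.dist x z : ℝ) + (K.dist y t : ℝ)) ((K.dist x t : ℝ) + (K.dist y z : ℝ)) + δ

/-- `K` is a `(G, P)`-graph witnessing that `G` is hyperbolic relative to the finite
collection `Ps` of subgroups: `K` is a connected fine hyperbolic graph, `G` acts
on it without inversions with finite edge stabilizers and finitely many orbits of
edges, and `Ps` is a set of representatives of the distinct conjugacy classes of
vertex stabilizers, with every infinite vertex stabilizer represented. -/
structure IsGPGraph [Group G] (φ : G →* Equiv.Perm V) (Ps : Set (Subgroup G))
    (K : SimpleGraph V) : Prop where
  finP : Ps.Finite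
  conn : K.Connected
  fine : Fine K
  hyp : Hyperbolic K
  acts : ActsOn φ K
  noInv : ∀ (g : G) (u w : V), K.Adj u w → φ g u = w → φ g w ≠ u
  finStabs : FiniteEdgeStabs φ K
  finOrbits : FinEdgeOrbits φ K
  parab : ∀ x : V, ¬ ((stab φ x : Set G)).Finite →
    ∃ P ∈ Ps, ∃ g : G, stab φ x = conjSub g P
  reps : ∀ P ∈ Ps, ∃ x : V, stab φ x = P
  distinct : ∀ P ∈ Ps, ∀ Q ∈ Ps, (∃ g : G, conjSub g P = Q) → P = Q

/-- `δ`-hyperbolicity of the path metric (four point condition with constant `δ`). -/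
def HyperbolicWith (δ : ℝ) (K : SimpleGraph V) : Prop :=
  ∀ x y z t : V,
    (K.dist x y : ℝ) + (K.dist z t : ℝ) ≤
      max ((K.dist x z : ℝ) + (K.dist y t : ℝ)) ((K.dist x t : ℝ) + (K.dist y z : ℝ)) + δ

/-- A walk is a `l`-quasigeodesic if each of its subwalks between vertices `u,v`
has length at most `l · d(u,v)`. -/
def IsQG (K : SimpleGraph V) (l : ℝ) {a b : V} (P : K.Walk a b) : Prop :=
  ∀ (u w : V) (P₁ : K.Walk a u) (P₂ : K.Walk u w) (P₃ : K.Walk w b),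
    P = P₁.append (P₂.append P₃) → (P₂.length : ℝ) ≤ l * (K.dist u w : ℝ)

/-- The concatenation of a chain of consecutive walks. -/
def chain {K : SimpleGraph V} : ∀ {n : ℕ} (x : Fin (n + 1) → V)
    (_ : ∀ i : Fin n, K.Walk (x i.castSucc) (x i.succ)),
    K.Walk (x 0) (x (Fin.last n))
  | 0, _, _ => SimpleGraph.Walk.nil
  | n + 1, x, seg =>
    ((seg 0).copy (congrArg x (by simp)) rfl).append
      ((chain (fun i : Fin (n + 1) => x i.succ)
          (fun i => (seg i.succ).copy (congrArg x (Fin.succ_castSucc i).symm) rfl)).copy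
        rfl (congrArg x (Fin.succ_last n)))

/-- The slim rectangle property with constant `e` for `l`-quasigeodesics. -/
def SlimRect (K : SimpleGraph V) (l e : ℝ) : Prop :=
  ∀ (a b c d : V) (Q₁ : K.Walk a b) (Q₂ : K.Walk b c) (Q₃ : K.Walk c d)
    (Q₄ : K.Walk d a), IsQG K l Q₁ → IsQG K l Q₂ → IsQG K l Q₃ → IsQG K l Q₄ →
    ∀ x ∈ Q₁.support, ∃ y : V,
      (y ∈ Q₂.support ∨ y ∈ Q₃.support ∨ y ∈ Q₄.support) ∧ (K.dist x y : ℝ) ≤ e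

namespace FT
open SimpleGraph Walk
variable {K : SimpleGraph V}

def qtake : ∀ {a b : V} (p : K.Walk a b) (n : ℕ), K.Walk a (p.getVert n)
  | _, _, Walk.nil, _ => Walk.nil
  | _, _, Walk.cons h q, 0 => Walk.nil
  | _, _, Walk.cons h q, (n+1) => Walk.cons h (qtake q n)

def qdrop : ∀ {a b : V} (p : K.Walk a b) (n : ℕ), K.Walk (p.getVert n) b
  | _, _, Walk.nil, _ => Walk.nil
  | _, _, Walk.cons h q, 0 => Walk.cons h q
  | _, _, Walk.cons _ q, (n+1) => qdrop q n

theorem qtake_append_qdrop : ∀ {a b : V} (p : K.Walk a b) (n : ℕ),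
    (qtake p n).append (qdrop p n) = p
  | _, _, Walk.nil, _ => rfl
  | _, _, Walk.cons h q, 0 => rfl
  | _, _, Walk.cons h q, (n+1) => by
      show Walk.cons h ((qtake q n).append (qdrop q n)) = _
      rw [qtake_append_qdrop]

theorem length_qtake : ∀ {a b : V} (p : K.Walk a b) (n : ℕ),
    (qtake p n).length = min n p.length
  | _, _, Walk.nil, n => by simp [qtake]
  | _, _, Walk.cons h q, 0 => by simp [qtake]; rfl
  | _, _, Walk.cons h q, (n+1) => by
      simp [qtake, length_qtake q n, Nat.succ_min_succ]

theorem length_qdrop : ∀ {a b : V} (p : K.Walk a b) (n : ℕ),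
    (qdrop p n).length = p.length - n
  | _, _, Walk.nil, n => by simp [qdrop]
  | _, _, Walk.cons h q, 0 => by simp [qdrop]; rfl
  | _, _, Walk.cons h q, (n+1) => by
      simp [qdrop, length_qdrop q n]

theorem getVert_qtake : ∀ {a b : V} (p : K.Walk a b) (n i : ℕ), i ≤ n →
    (qtake p n).getVert i = p.getVert i
  | _, _, Walk.nil, n, i, _ => by simp [qtake]
  | _, _, Walk.cons h q, 0, i, hi => by
      simp_all [qtake]; rfl
  | _, _, Walk.cons h q, (n+1), 0, hi => by simp [qtake]
  | _, _, Walk.cons h q, (n+1), (i+1), hi => by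
      simp only [qtake, Walk.getVert_cons_succ]
      exact getVert_qtake q n i (by omega)

theorem getVert_qdrop : ∀ {a b : V} (p : K.Walk a b) (n i : ℕ),
    (qdrop p n).getVert i = p.getVert (n + i)
  | _, _, Walk.nil, n, i => rfl
  | _, _, Walk.cons h q, 0, i => by simp [qdrop]; rfl
  | _, _, Walk.cons h q, (n+1), i => by
      simpa [qdrop, Nat.succ_add] using getVert_qdrop q n i

theorem path_getVert_inj : ∀ {a b : V} {p : K.Walk a b}, p.IsPath →
    ∀ {i j : ℕ}, i ≤ p.length → j ≤ p.length → p.getVert i = p.getVert j → i = j := by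
  intro a b p
  induction p with
  | nil => intro _ i j hi hj _; simp at hi hj; omega
  | cons h q ih =>
    intro hp i j hi hj hij
    rw [Walk.cons_isPath_iff] at hp
    match i, j with
    | 0, 0 => rfl
    | 0, (j+1) =>
      exfalso
      apply hp.2
      rw [Walk.mem_support_iff_exists_getVert]
      exact ⟨j, by simpa using hij.symm, by simpa using hj⟩
    | (i+1), 0 =>
      exfalso
      apply hp.2
      rw [Walk.mem_support_iff_exists_getVert]
      exact ⟨i, by simpa using hij, by simpa using hi⟩
    | (i+1), (j+1) =>
      have := ih hp.1 (i := i) (j := j) (by simpa using hi) (by simpa using hj)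
        (by simpa using hij)
      omega

theorem dist_tri {x y z : V} (h1 : K.Reachable x y) (h2 : K.Reachable y z) :
    K.dist x z ≤ K.dist x y + K.dist y z := by
  obtain ⟨p, hp⟩ := h1.exists_walk_length_eq_dist
  obtain ⟨q, hq⟩ := h2.exists_walk_length_eq_dist
  calc K.dist x z ≤ (p.append q).length := dist_le _
  _ = _ := by rw [Walk.length_append, hp, hq]

theorem dist_start_le {x y z : V} (p : K.Walk x y) (h : z ∈ p.support) :
    K.dist x z ≤ p.length := by
  obtain ⟨n, hn, hle⟩ := Walk.mem_support_iff_exists_getVert.mp h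
  subst hn
  have h1 : K.dist x (p.getVert n) ≤ (qtake p n).length := dist_le _
  rw [length_qtake] at h1
  omega

theorem reachable_of_mem_support {x y z : V} (p : K.Walk x y) (h : z ∈ p.support) :
    K.Reachable x z := by
  obtain ⟨n, hn, -⟩ := Walk.mem_support_iff_exists_getVert.mp h
  exact hn ▸ (qtake p n).reachable


theorem isQG_nil {l : ℝ} (hl : 1 ≤ l) (x : V) : IsQG K l (Walk.nil : K.Walk x x) := by
  intro u w P₁ P₂ P₃ h
  have h0 : P₁.length + (P₂.length + P₃.length) = 0 := by
    simpa [Walk.length_append] using (congrArg Walk.length h).symm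
  have h2 : P₂.length = 0 := by omega
  rw [h2]
  have : (0:ℝ) ≤ K.dist u w := by positivity
  push_cast
  nlinarith

theorem isQG_of_geodesic {x y : V} {l : ℝ} (hl : 1 ≤ l) (p : K.Walk x y)
    (hp : p.length = K.dist x y) : IsQG K l p := by
  intro u w P₁ P₂ P₃ h
  have htri : K.dist x y ≤ K.dist x u + (K.dist u w + K.dist w y) := by
    have h1 := dist_tri (K := K) P₁.reachable (P₂.append P₃).reachable
    have h2 := dist_tri (K := K) P₂.reachable P₃.reachable
    omega
  have hd1 : K.dist x u ≤ P₁.length := dist_le _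
  have hd3 : K.dist w y ≤ P₃.length := dist_le _
  have hlen : P₁.length + (P₂.length + P₃.length) = p.length := by
    simpa [Walk.length_append] using (congrArg Walk.length h).symm
  have h2 : P₂.length ≤ K.dist u w := by omega
  have : (0:ℝ) ≤ K.dist u w := by positivity
  have : (P₂.length : ℝ) ≤ K.dist u w := by exact_mod_cast h2
  nlinarith

theorem isQG_infix {x y u w : V} {l : ℝ} {P : K.Walk x y} (hP : IsQG K l P)
    (X : K.Walk x u) (W : K.Walk u w) (Y : K.Walk w y)
    (h : P = X.append (W.append Y)) : IsQG K l W := by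
  intro u' w' W₁ W₂ W₃ hW
  apply hP u' w' (X.append W₁) W₂ (W₃.append Y)
  rw [h, hW]
  simp [Walk.append_assoc]

theorem isQG_reverse {x y : V} {l : ℝ} {P : K.Walk x y} (hP : IsQG K l P) :
    IsQG K l P.reverse := by
  intro u w P₁ P₂ P₃ h
  have h' : P = P₃.reverse.append (P₂.reverse.append P₁.reverse) := by
    have := congrArg Walk.reverse h
    rw [Walk.reverse_reverse] at this
    rw [this]
    simp [Walk.reverse_append, Walk.append_assoc]
  have := hP w u P₃.reverse P₂.reverse P₁.reverse h'
  rw [Walk.length_reverse] at this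
  rwa [dist_comm] at this

theorem isQG_copy {x y x' y' : V} {l : ℝ} {P : K.Walk x y} (hx : x = x') (hy : y = y')
    (hP : IsQG K l P) : IsQG K l (P.copy hx hy) := by
  subst hx; subst hy; simpa using hP

theorem copy_eq_of_eq {u v u' v' : V} {p : K.Walk u v} {q : K.Walk u' v'}
    (hu : u = u') (hv : v = v') (h : p.copy hu hv = q) :
    p = q.copy hu.symm hv.symm := by
  subst hu; subst hv; simpa using h

theorem append_copy_right {u v w w' : V} (p : K.Walk u v) (q : K.Walk v w) (h : w = w') :
    (p.append q).copy rfl h = p.append (q.copy rfl h) := by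
  subst h; rfl

theorem append_congr {u v v' w : V} (h : v = v') (p : K.Walk u v) (p' : K.Walk u v')
    (q : K.Walk v w) (q' : K.Walk v' w) (hp : p.copy rfl h = p') (hq : q.copy h rfl = q') :
    p.append q = p'.append q' := by
  subst h
  simp only [Walk.copy_rfl_rfl] at hp hq
  rw [hp, hq]

theorem chain_split₂ : ∀ {n : ℕ} (x : Fin (n+1) → V)
    (seg : ∀ i : Fin n, K.Walk (x i.castSucc) (x i.succ)) (i j : Fin (n+1)), i ≤ j →
    ∃ (U : K.Walk (x 0) (x i)) (M : K.Walk (x i) (x j))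
      (W : K.Walk (x j) (x (Fin.last n))),
      chain x seg = U.append (M.append W) ∧
      U.length = (∑ t : Fin n, if (t : ℕ) < (i : ℕ) then (seg t).length else 0) ∧
      M.length = (∑ t : Fin n, if (i : ℕ) ≤ (t : ℕ) ∧ (t : ℕ) < (j : ℕ)
        then (seg t).length else 0) := by
  intro n
  induction n with
  | zero =>
    intro x seg i j hij
    have hi : i = 0 := Fin.fin_one_eq_zero i
    have hj : j = 0 := Fin.fin_one_eq_zero j
    subst hi; subst hj
    exact ⟨Walk.nil, Walk.nil, chain x seg, by simp, by simp, by simp⟩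
  | succ n IH =>
    intro x seg i j hij
    have hch : chain x seg =
        ((seg 0).copy (congrArg x (by simp)) rfl).append
          ((chain (fun i : Fin (n + 1) => x i.succ)
              (fun i => (seg i.succ).copy (congrArg x (Fin.succ_castSucc i).symm) rfl)).copy
            rfl (congrArg x (Fin.succ_last n))) := rfl
    rcases Fin.eq_zero_or_eq_succ i with rfl | ⟨i', rfl⟩
    · rcases Fin.eq_zero_or_eq_succ j with rfl | ⟨j', rfl⟩
      · exact ⟨Walk.nil, Walk.nil, chain x seg, by simp, by simp, by simp⟩
      · obtain ⟨U', M', W', hch', hU', hM'⟩ := IH (fun i => x i.succ)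
          (fun i => (seg i.succ).copy (congrArg x (Fin.succ_castSucc i).symm) rfl)
          0 j' (Fin.zero_le _)
        have hU'nil : U' = Walk.nil := by
          rw [← Walk.nil_iff_eq_nil, ← Walk.length_eq_zero_iff, hU']; simp
        rw [hU'nil, Walk.nil_append] at hch'
        refine ⟨Walk.nil,
          ((seg 0).copy (congrArg x (by simp)) rfl).append M',
          W'.copy rfl (congrArg x (Fin.succ_last n)), ?_, by simp, ?_⟩
        · rw [hch, hch', append_copy_right, Walk.nil_append, ← Walk.append_assoc]
        · rw [Walk.length_append, Walk.length_copy, hM', Fin.sum_univ_succ]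
          rw [if_pos (by simp [Fin.val_succ])]
          congr 1
          refine Finset.sum_congr rfl fun k _ => ?_
          simp only [Walk.length_copy]
          refine if_congr ?_ rfl rfl
          simp only [Fin.val_succ, Fin.val_zero]
          omega
    · have hj : ∃ j'' : Fin (n+1), j = j''.succ := by
        rcases Fin.eq_zero_or_eq_succ j with rfl | h
        · exact absurd hij (by simp [Fin.le_def, Fin.val_succ])
        · exact h
      obtain ⟨j', rfl⟩ := hj
      have hij' : i' ≤ j' := by
        simp only [Fin.le_def, Fin.val_succ] at hij ⊢; omega
      obtain ⟨U', M', W', hch', hU', hM'⟩ := IH (fun i => x i.succ)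
        (fun i => (seg i.succ).copy (congrArg x (Fin.succ_castSucc i).symm) rfl)
        i' j' hij'
      refine ⟨((seg 0).copy (congrArg x (by simp)) rfl).append U', M',
        W'.copy rfl (congrArg x (Fin.succ_last n)), ?_, ?_, ?_⟩
      · rw [hch, hch', append_copy_right, append_copy_right, Walk.append_assoc]
      · rw [Walk.length_append, Walk.length_copy, hU', Fin.sum_univ_succ]
        rw [if_pos (by simp [Fin.val_succ])]
        congr 1
        refine Finset.sum_congr rfl fun k _ => ?_
        simp only [Walk.length_copy]
        refine if_congr ?_ rfl rfl
        simp only [Fin.val_succ]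
        omega
      · rw [hM', Fin.sum_univ_succ]
        rw [if_neg (by simp [Fin.val_succ])]
        rw [zero_add]
        refine Finset.sum_congr rfl fun k _ => ?_
        simp only [Walk.length_copy]
        refine if_congr ?_ rfl rfl
        simp only [Fin.val_succ]
        omega

theorem chain_of_pos : ∀ {m : ℕ} {a b : V} (P : K.Walk a b) (t : Fin (m+1) → V)
    (pos : Fin (m+1) → ℕ)
    (hmono : ∀ i j : Fin (m+1), i ≤ j → pos i ≤ pos j)
    (h0 : pos 0 = 0) (hlast : pos (Fin.last m) = P.length)
    (hget : ∀ k, P.getVert (pos k) = t k) (ha : t 0 = a) (hb : t (Fin.last m) = b),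
    ∃ seg : ∀ i : Fin m, K.Walk (t i.castSucc) (t i.succ),
      (chain t seg).copy ha hb = P ∧
      ∀ (i : Fin m) (z : V), z ∈ (seg i).support →
        ∃ s : ℕ, pos i.castSucc ≤ s ∧ s ≤ pos i.succ ∧ P.getVert s = z := by
  intro m
  induction m with
  | zero =>
    intro a b P t pos hmono h0 hlast hget ha hb
    subst ha
    have hPlen : P.length = 0 := by
      rw [← hlast, Fin.fin_one_eq_zero (Fin.last 0), h0]
    cases P with
    | nil =>
      refine ⟨fun i => i.elim0, ?_, fun i => i.elim0⟩
      rfl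
    | cons h q => simp at hPlen
  | succ m IH =>
    intro a b P t pos hmono h0 hlast hget ha hb
    subst ha; subst hb
    have hk1le : ∀ k : Fin (m+1), pos (0 : Fin (m+1)).succ ≤ pos k.succ :=
      fun k => hmono _ _ (Fin.succ_le_succ_iff.mpr (Fin.zero_le k))
    have hn1le : pos (0 : Fin (m+1)).succ ≤ P.length := by
      rw [← hlast]; exact hmono _ _ (Fin.le_last _)
    obtain ⟨σ, hσ, hσsupp⟩ := IH (qdrop P (pos (0 : Fin (m+1)).succ))
      (fun k => t k.succ) (fun k => pos k.succ - pos (0 : Fin (m+1)).succ)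
      (fun i j hij => Nat.sub_le_sub_right (hmono _ _ (Fin.succ_le_succ_iff.mpr hij)) _)
      (Nat.sub_self _)
      (by
        show pos (Fin.last m).succ - pos ((0 : Fin (m+1)).succ) = _
        rw [length_qdrop]
        have h1 : pos (Fin.last m).succ = P.length := by
          rw [congrArg pos (Fin.succ_last m), hlast]
        omega)
      (by
        intro k
        rw [getVert_qdrop]
        rw [Nat.add_sub_cancel' (hk1le k)]
        exact hget k.succ)
      (hget (0 : Fin (m+1)).succ).symm
      (congrArg t (Fin.succ_last m))
    refine ⟨Fin.cases (motive := fun i => K.Walk (t i.castSucc) (t i.succ)) ((qtake P (pos (0 : Fin (m+1)).succ)).copy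
        (congrArg t Fin.castSucc_zero).symm (hget (0 : Fin (m+1)).succ))
        (fun i₀ => (σ i₀).copy (congrArg t (Fin.succ_castSucc i₀)) rfl), ?_, ?_⟩
    · have hσ' := copy_eq_of_eq _ _ hσ
      calc (chain t _).copy rfl rfl
          = ((Fin.cases (motive := fun i => K.Walk (t i.castSucc) (t i.succ)) ((qtake P (pos (0 : Fin (m+1)).succ)).copy
                (congrArg t Fin.castSucc_zero).symm (hget (0 : Fin (m+1)).succ))
                (fun i₀ => (σ i₀).copy (congrArg t (Fin.succ_castSucc i₀)) rfl)
                (0 : Fin (m+1))).copy (congrArg t (by simp)) rfl).append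
              ((chain (fun k : Fin (m+1) => t k.succ) σ).copy rfl
                (congrArg t (Fin.succ_last m))) := by
            rw [Walk.copy_rfl_rfl]
            have hseg'' : (fun i : Fin m =>
                ((Fin.cases (motive := fun i => K.Walk (t i.castSucc) (t i.succ)) ((qtake P (pos (0 : Fin (m+1)).succ)).copy
                  (congrArg t Fin.castSucc_zero).symm (hget (0 : Fin (m+1)).succ))
                  (fun i₀ => (σ i₀).copy (congrArg t (Fin.succ_castSucc i₀)) rfl))
                  i.succ).copy (congrArg t (Fin.succ_castSucc i).symm) rfl) = σ := by
              funext i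
              simp only [Fin.cases_succ, Walk.copy_copy]
              rfl
            conv_lhs => rw [chain]
            rw [hseg'']
        _ = (qtake P (pos (0 : Fin (m+1)).succ)).append
              (qdrop P (pos (0 : Fin (m+1)).succ)) := by
            refine append_congr (hget (0 : Fin (m+1)).succ).symm _ _ _ _ ?_ ?_
            · simp only [Fin.cases_zero, Walk.copy_copy]
              rfl
            · rw [hσ']
              simp only [Walk.copy_copy]
              rfl
        _ = P := qtake_append_qdrop P _
    · intro i z hz
      induction i using Fin.cases with
      | zero =>
        simp only [Fin.cases_zero, Walk.support_copy] at hz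
        obtain ⟨n, hn, hle⟩ := Walk.mem_support_iff_exists_getVert.mp hz
        rw [length_qtake] at hle
        have hle' : n ≤ pos (0 : Fin (m+1)).succ := by omega
        refine ⟨n, ?_, hle', ?_⟩
        · rw [congrArg pos Fin.castSucc_zero, h0]
          omega
        · rw [← getVert_qtake P _ n hle', hn]
      | succ i₀ =>
        simp only [Fin.cases_succ, Walk.support_copy] at hz
        obtain ⟨s', hs1, hs2, hs3⟩ := hσsupp i₀ z hz
        refine ⟨pos (0 : Fin (m+1)).succ + s', ?_, ?_, ?_⟩
        · rw [congrArg pos (Fin.succ_castSucc i₀).symm]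
          have := hk1le i₀.castSucc
          omega
        · have := hk1le i₀.succ
          omega
        · rw [← hs3, getVert_qdrop]

end FT


/-- Fellow traveling: if `P` is an embedded `λ`-quasigeodesic and `G` is a
geodesic with the same endpoints subdivided into segments `G i` with
`10ε ≤ |G i| ≤ 20ε`, and `S i` is a geodesic from the startpoint of `G i` to
`P` ending at `t i`, then the subpaths `P i` of `P` from the endpoint of `S i`
to the endpoint of `S (i+1)` (and `P m` ending at the endpoint of `P`) pairwise
share at most one point, and consequently `P = P₁ P₂ ⋯ P_m`. -/
theorem fellow_traveling_path_splitting (K : SimpleGraph V) (δ : ℝ)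
    (hδ : HyperbolicWith δ K) (l e : ℝ) (hl : 1 ≤ l) (he : 0 < e)
    (hslim : SlimRect K l e)
    (a b : V) (P : K.Walk a b) (hPpath : P.IsPath) (hPqg : IsQG K l P)
    (m : ℕ) (hm : 0 < m) (gv : Fin (m + 1) → V)
    (hg0 : gv 0 = a) (hgl : gv (Fin.last m) = b)
    (Gseg : ∀ i : Fin m, K.Walk (gv i.castSucc) (gv i.succ))
    (hgeo : (chain gv Gseg).length = K.dist a b)
    (hlen : ∀ i : Fin m, 10 * e ≤ ((Gseg i).length : ℝ) ∧
      ((Gseg i).length : ℝ) ≤ 20 * e)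
    (t : Fin (m + 1) → V) (ht : ∀ i : Fin m, t i.castSucc ∈ P.support)
    (htl : t (Fin.last m) = b)
    (S : ∀ i : Fin m, K.Walk (gv i.castSucc) (t i.castSucc))
    (hSgeo : ∀ i : Fin m, (S i).length = K.dist (gv i.castSucc) (t i.castSucc))
    (hSmin : ∀ i : Fin m, ∀ w ∈ P.support,
      K.dist (gv i.castSucc) (t i.castSucc) ≤ K.dist (gv i.castSucc) w) :
    ∃ Pseg : ∀ i : Fin m, K.Walk (t i.castSucc) (t i.succ),
      (∀ i j : Fin m, i ≠ j → ∀ z w : V,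
        z ∈ (Pseg i).support → z ∈ (Pseg j).support →
        w ∈ (Pseg i).support → w ∈ (Pseg j).support → z = w) ∧
      ∃ h0 : t 0 = a, (chain t Pseg).copy h0 htl = P := by
  classical
  have eqlz : ∀ {u v : V} (p : K.Walk u v), p.length = 0 → u = v := by
    intro u v p h
    cases p with
    | nil => rfl
    | cons h q => simp at h
  have hz0 : ((⟨0, hm⟩ : Fin m).castSucc) = (0 : Fin (m+1)) := rfl
  have t0a : t 0 = a := by
    have h2 : gv ((⟨0, hm⟩ : Fin m).castSucc) = a := by rw [hz0, hg0]
    have h1 := hSmin ⟨0, hm⟩ a P.start_mem_support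
    rw [h2, dist_self] at h1
    have h3 : (S ⟨0, hm⟩).length = 0 := by rw [hSgeo, h2]; omega
    have h4 := eqlz _ h3
    rw [← hz0, ← h4, h2]
  have hGwQG : IsQG K l ((chain gv Gseg).copy hg0 hgl) :=
    FT.isQG_of_geodesic hl _ (by rw [Walk.length_copy]; exact hgeo)
  have hS : ∀ i₀ : Fin m, (K.dist (gv i₀.castSucc) (t i₀.castSucc) : ℝ) ≤ e := by
    intro i₀
    obtain ⟨U, M, W, hUMW, -, -⟩ := FT.chain_split₂ gv Gseg i₀.castSucc i₀.castSucc le_rfl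
    have hmem : gv i₀.castSucc ∈ ((chain gv Gseg).copy hg0 hgl).support := by
      rw [Walk.support_copy, hUMW, Walk.support_append]
      exact List.mem_append_left _ U.end_mem_support
    obtain ⟨y, hy, hyd⟩ := hslim a b b a ((chain gv Gseg).copy hg0 hgl) Walk.nil
      P.reverse Walk.nil hGwQG (FT.isQG_nil hl b) (FT.isQG_reverse hPqg) (FT.isQG_nil hl a)
      _ hmem
    have hyP : y ∈ P.support := by
      rcases hy with h | h | h
      · simp only [Walk.support_nil, List.mem_singleton] at h
        exact h ▸ P.end_mem_support
      · rwa [Walk.support_reverse, List.mem_reverse] at h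
      · simp only [Walk.support_nil, List.mem_singleton] at h
        exact h ▸ P.start_mem_support
    calc (K.dist (gv i₀.castSucc) (t i₀.castSucc) : ℝ)
        ≤ (K.dist (gv i₀.castSucc) y : ℝ) := by exact_mod_cast hSmin i₀ y hyP
      _ ≤ e := hyd
  have tmem : ∀ k : Fin (m+1), t k ∈ P.support := by
    intro k
    induction k using Fin.lastCases with
    | last => rw [htl]; exact P.end_mem_support
    | cast i => exact ht i
  have hex : ∀ k, ∃ n, P.getVert n = t k ∧ n ≤ P.length :=
    fun k => Walk.mem_support_iff_exists_getVert.mp (tmem k)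
  choose pos hpos hposle using hex
  have pos0 : pos 0 = 0 :=
    FT.path_getVert_inj hPpath (hposle 0) (Nat.zero_le _)
      (by rw [hpos, Walk.getVert_zero, t0a])
  have poslast : pos (Fin.last m) = P.length :=
    FT.path_getVert_inj hPpath (hposle _) le_rfl
      (by rw [hpos, Walk.getVert_length, htl])
  have hmono : ∀ i j : Fin (m+1), i ≤ j → pos i ≤ pos j := by
    intro i j hij
    by_contra hcon
    push_neg at hcon
    have hne : i ≠ j := by intro h; subst h; omega
    have hi0 : i ≠ 0 := by intro h; subst h; rw [pos0] at hcon; omega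
    have hjlast : j ≠ Fin.last m := by
      intro h; subst h; rw [poslast] at hcon; have := hposle i; omega
    have hilast : i ≠ Fin.last m := by
      intro h
      subst h
      exact hjlast (le_antisymm (Fin.le_last j) hij)
    obtain ⟨i₀, rfl⟩ := Fin.exists_castSucc_eq.mpr hilast
    obtain ⟨j₀, rfl⟩ := Fin.exists_castSucc_eq.mpr hjlast
    have hi₀1 : 1 ≤ (i₀ : ℕ) := by
      rcases Nat.eq_zero_or_pos (i₀ : ℕ) with h | h
      · exact absurd (Fin.ext (by simpa using h) : i₀.castSucc = 0) hi0
      · omega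
    have hij₀ : (i₀ : ℕ) < (j₀ : ℕ) := by
      have h1 : (i₀ : ℕ) ≤ (j₀ : ℕ) :=
        Fin.le_def.mp (Fin.castSucc_le_castSucc_iff.mp hij)
      have h2 : (i₀ : ℕ) ≠ (j₀ : ℕ) := by
        intro h
        exact hne (by exact congrArg Fin.castSucc (Fin.ext h))
      omega
    obtain ⟨U, M, W, hUMW, hU, hM⟩ := FT.chain_split₂ gv Gseg i₀.castSucc j₀.castSucc hij
    have htot : U.length + (M.length + W.length) = K.dist a b := by
      have h1 := congrArg Walk.length hUMW
      rw [hgeo] at h1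
      simp only [Walk.length_append] at h1
      omega
    have hdU : K.dist a (gv i₀.castSucc) ≤ U.length := by
      have h2 : K.dist a (gv i₀.castSucc) = K.dist (gv 0) (gv i₀.castSucc) :=
        congrArg (fun z => K.dist z (gv i₀.castSucc)) hg0.symm
      rw [h2]; exact dist_le U
    have hdM : K.dist (gv i₀.castSucc) (gv j₀.castSucc) ≤ M.length := dist_le M
    have hdW : K.dist (gv j₀.castSucc) b ≤ W.length := by
      have h2 : K.dist (gv j₀.castSucc) b = K.dist (gv j₀.castSucc) (gv (Fin.last m)) :=
        congrArg (K.dist (gv j₀.castSucc)) hgl.symm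
      rw [h2]; exact dist_le W
    have hr1 : K.Reachable a (gv i₀.castSucc) := (U.copy hg0 rfl).reachable
    have hr2 : K.Reachable (gv i₀.castSucc) (gv j₀.castSucc) := M.reachable
    have hr3 : K.Reachable (gv j₀.castSucc) b := (W.copy rfl hgl).reachable
    have t1 : K.dist a b ≤ K.dist a (gv i₀.castSucc) + K.dist (gv i₀.castSucc) b :=
      FT.dist_tri hr1 (hr2.trans hr3)
    have t2 : K.dist (gv i₀.castSucc) b ≤
        K.dist (gv i₀.castSucc) (gv j₀.castSucc) + K.dist (gv j₀.castSucc) b :=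
      FT.dist_tri hr2 hr3
    have t3 : K.dist a b ≤ K.dist a (gv j₀.castSucc) + K.dist (gv j₀.castSucc) b :=
      FT.dist_tri (hr1.trans hr2) hr3
    have hdUeq : K.dist a (gv i₀.castSucc) = U.length := by omega
    have hdMeq : K.dist (gv i₀.castSucc) (gv j₀.castSucc) = M.length := by omega
    have hdQ : K.dist a (gv j₀.castSucc) = U.length + M.length := by
      have hq := dist_le ((U.append M).copy hg0 rfl)
      rw [Walk.length_copy, Walk.length_append] at hq
      omega
    have hU10 : 10 * e ≤ (U.length : ℝ) := by
      have h1 := (hlen ⟨0, hm⟩).1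
      have h2 : (Gseg ⟨0, hm⟩).length ≤ U.length := by
        rw [hU]
        have h3 := Finset.single_le_sum
          (f := fun k : Fin m =>
            if (k : ℕ) < ((i₀.castSucc : Fin (m+1)) : ℕ) then (Gseg k).length else 0)
          (fun _ _ => Nat.zero_le _) (Finset.mem_univ (⟨0, hm⟩ : Fin m))
        simp only at h3
        rwa [if_pos (by simp; omega)] at h3
      calc 10*e ≤ ((Gseg ⟨0,hm⟩).length : ℝ) := h1
        _ ≤ _ := by exact_mod_cast h2
    have hM10 : 10 * e ≤ (M.length : ℝ) := by
      have h1 := (hlen i₀).1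
      have h2 : (Gseg i₀).length ≤ M.length := by
        rw [hM]
        have h3 := Finset.single_le_sum
          (f := fun k : Fin m =>
            if ((i₀.castSucc : Fin (m+1)) : ℕ) ≤ (k : ℕ) ∧
              (k : ℕ) < ((j₀.castSucc : Fin (m+1)) : ℕ) then (Gseg k).length else 0)
          (fun _ _ => Nat.zero_le _) (Finset.mem_univ i₀)
        rwa [if_pos (by simp; omega)] at h3
      calc 10*e ≤ ((Gseg i₀).length : ℝ) := h1
        _ ≤ _ := by exact_mod_cast h2
    have hQgeo : IsQG K l ((U.append M).copy hg0 rfl) :=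
      FT.isQG_of_geodesic hl _ (by rw [Walk.length_copy, Walk.length_append, hdQ])
    have hmemQ : gv i₀.castSucc ∈ ((U.append M).copy hg0 rfl).support := by
      rw [Walk.support_copy, Walk.support_append]
      exact List.mem_append_left _ U.end_mem_support
    have hAinfix : IsQG K l (FT.qtake P (pos j₀.castSucc)) :=
      FT.isQG_infix hPqg Walk.nil _ (FT.qdrop P (pos j₀.castSucc))
        (by rw [Walk.nil_append, FT.qtake_append_qdrop])
    obtain ⟨y, hy, hyd⟩ := hslim a (gv j₀.castSucc) (t j₀.castSucc) a
      ((U.append M).copy hg0 rfl) (S j₀)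
      ((FT.qtake P (pos j₀.castSucc)).copy rfl (hpos j₀.castSucc)).reverse Walk.nil
      hQgeo (FT.isQG_of_geodesic hl _ (hSgeo j₀))
      (FT.isQG_reverse (FT.isQG_copy _ _ hAinfix)) (FT.isQG_nil hl a) _ hmemQ
    rcases hy with hyS | hyA | hya
    · have h1 : K.dist (gv j₀.castSucc) y ≤ (S j₀).length := FT.dist_start_le _ hyS
      rw [hSgeo j₀] at h1
      have h2 : (K.dist (gv j₀.castSucc) y : ℝ) ≤ e :=
        le_trans (by exact_mod_cast h1) (hS j₀)
      have hry : K.Reachable (gv j₀.castSucc) y := FT.reachable_of_mem_support _ hyS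
      have h3 : K.dist (gv i₀.castSucc) (gv j₀.castSucc) ≤
          K.dist (gv i₀.castSucc) y + K.dist y (gv j₀.castSucc) :=
        FT.dist_tri (hr2.trans hry) hry.symm
      rw [SimpleGraph.dist_comm (u := y)] at h3
      have h4 : (K.dist (gv i₀.castSucc) (gv j₀.castSucc) : ℝ) ≤ 2 * e := by
        have := (Nat.cast_le (α := ℝ)).mpr h3
        push_cast at this
        linarith
      rw [hdMeq] at h4
      linarith
    · rw [Walk.support_reverse, List.mem_reverse, Walk.support_copy] at hyA
      obtain ⟨s, hsy, hsle⟩ := Walk.mem_support_iff_exists_getVert.mp hyA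
      rw [FT.length_qtake] at hsle
      have hsle' : s ≤ pos j₀.castSucc := by omega
      have hPy : P.getVert s = y := by
        rw [← FT.getVert_qtake P (pos j₀.castSucc) s hsle', hsy]
      have hBlen : (FT.qtake P (pos i₀.castSucc)).length = pos i₀.castSucc := by
        rw [FT.length_qtake]
        exact min_eq_left (hposle _)
      have hsB : s ≤ pos i₀.castSucc := by omega
      have hBy : (FT.qtake P (pos i₀.castSucc)).getVert s = y := by
        rw [FT.getVert_qtake P _ s hsB]; exact hPy
      have hRQG : IsQG K l ((FT.qdrop (FT.qtake P (pos i₀.castSucc)) s).copy hBy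
          (hpos i₀.castSucc)) := by
        refine FT.isQG_copy _ _ (FT.isQG_infix hPqg
          (FT.qtake (FT.qtake P (pos i₀.castSucc)) s) _
          (FT.qdrop P (pos i₀.castSucc)) ?_)
        conv_lhs => rw [← FT.qtake_append_qdrop P (pos i₀.castSucc),
          ← FT.qtake_append_qdrop (FT.qtake P (pos i₀.castSucc)) s]
        rw [Walk.append_assoc]
      have htjmem : t j₀.castSucc ∈ ((FT.qdrop (FT.qtake P (pos i₀.castSucc)) s).copy hBy
          (hpos i₀.castSucc)).support := by
        rw [Walk.support_copy]
        apply Walk.mem_support_iff_exists_getVert.mpr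
        refine ⟨pos j₀.castSucc - s, ?_, ?_⟩
        · rw [FT.getVert_qdrop]
          have h5 : s + (pos j₀.castSucc - s) = pos j₀.castSucc := by omega
          rw [h5, FT.getVert_qtake P _ _ (by omega)]
          exact hpos j₀.castSucc
        · rw [FT.length_qdrop, hBlen]; omega
      have hry : K.Reachable (gv i₀.castSucc) y := by
        have h1 : K.Reachable a y := by
          rw [← hPy]; exact (FT.qtake P s).reachable
        exact ((U.copy hg0 rfl).reverse.reachable).trans h1
      obtain ⟨N, hN⟩ := hry.exists_walk_length_eq_dist
      obtain ⟨y₂, hy₂, hy₂d⟩ := hslim y (t i₀.castSucc) (gv i₀.castSucc) (gv i₀.castSucc)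
        ((FT.qdrop (FT.qtake P (pos i₀.castSucc)) s).copy hBy (hpos i₀.castSucc))
        (S i₀).reverse Walk.nil N
        hRQG (FT.isQG_reverse (FT.isQG_of_geodesic hl _ (hSgeo i₀))) (FT.isQG_nil hl _)
        (FT.isQG_of_geodesic hl _ hN) _ htjmem
      obtain ⟨hy₂close, hrt⟩ : (K.dist (gv i₀.castSucc) y₂ : ℝ) ≤ e ∧
          K.Reachable (gv i₀.castSucc) y₂ := by
        rcases hy₂ with h | h | h
        · rw [Walk.support_reverse, List.mem_reverse] at h
          have h1 := FT.dist_start_le _ h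
          rw [hSgeo i₀] at h1
          exact ⟨le_trans (by exact_mod_cast h1) (hS i₀),
            FT.reachable_of_mem_support _ h⟩
        · simp only [Walk.support_nil, List.mem_singleton] at h
          subst h
          refine ⟨?_, Reachable.refl _⟩
          rw [SimpleGraph.dist_self]
          simpa using he.le
        · have h1 := FT.dist_start_le N h
          rw [hN] at h1
          exact ⟨le_trans (by exact_mod_cast h1) hyd,
            FT.reachable_of_mem_support N h⟩
      have hrt2 : K.Reachable y₂ (t j₀.castSucc) :=
        (hrt.symm.trans ((U.copy hg0 rfl).reverse.reachable)).trans
          ((FT.qtake P (pos j₀.castSucc)).copy rfl (hpos j₀.castSucc)).reachable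
      have htri : K.dist (gv i₀.castSucc) (t j₀.castSucc) ≤
          K.dist (gv i₀.castSucc) y₂ + K.dist y₂ (t j₀.castSucc) := FT.dist_tri hrt hrt2
      have htri2 : K.dist (gv i₀.castSucc) (gv j₀.castSucc) ≤
          K.dist (gv i₀.castSucc) (t j₀.castSucc) + K.dist (t j₀.castSucc) (gv j₀.castSucc) :=
        FT.dist_tri (hrt.trans hrt2) (S j₀).reverse.reachable
      have hd1 : (K.dist y₂ (t j₀.castSucc) : ℝ) ≤ e := by
        rw [SimpleGraph.dist_comm]
        exact hy₂d
      have hd2 : (K.dist (t j₀.castSucc) (gv j₀.castSucc) : ℝ) ≤ e := by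
        rw [SimpleGraph.dist_comm]
        exact hS j₀
      have hc1 := (Nat.cast_le (α := ℝ)).mpr htri
      have hc2 := (Nat.cast_le (α := ℝ)).mpr htri2
      have hc3 : (K.dist (gv i₀.castSucc) (gv j₀.castSucc) : ℝ) = (M.length : ℝ) := by
        exact_mod_cast hdMeq
      push_cast at hc1 hc2
      linarith
    · simp only [Walk.support_nil, List.mem_singleton] at hya
      subst hya
      rw [SimpleGraph.dist_comm, hdUeq] at hyd
      linarith
  obtain ⟨Pseg, hPeq, hPsupp⟩ := FT.chain_of_pos P t pos hmono pos0 poslast hpos t0a htl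
  refine ⟨Pseg, ?_, t0a, hPeq⟩
  have key : ∀ (i j : Fin m), (i : ℕ) < (j : ℕ) → ∀ z, z ∈ (Pseg i).support →
      z ∈ (Pseg j).support → z = P.getVert (pos i.succ) := by
    intro i j hij z hzi hzj
    obtain ⟨s1, hs11, hs12, hs13⟩ := hPsupp i z hzi
    obtain ⟨s2, hs21, hs22, hs23⟩ := hPsupp j z hzj
    have hs12' : s1 ≤ P.length := le_trans hs12 (hposle _)
    have hs22' : s2 ≤ P.length := le_trans hs22 (hposle _)
    have heq12 : s1 = s2 := FT.path_getVert_inj hPpath hs12' hs22' (by rw [hs13, hs23])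
    have hord : pos i.succ ≤ pos j.castSucc := by
      apply hmono
      rw [Fin.le_def]
      simp only [Fin.val_succ, Fin.coe_castSucc]
      omega
    have hfin : s1 = pos i.succ := by omega
    rw [← hs13, hfin]
  intro i j hne z w hzi hzj hwi hwj
  have hvne : (i : ℕ) ≠ (j : ℕ) := fun h => hne (Fin.ext h)
  rcases lt_or_gt_of_ne hvne with h | h
  · rw [key i j h z hzi hzj, key i j h w hwi hwj]
  · rw [key j i h z hzj hzi, key j i h w hwj hwi]
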